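/- For d = 4 and t > 0, there is a constant C > 0 such that for all r ∈ [0,1) and θ ∈ [0,2π], the quantity M(re^{iθ})² = r²·∫_{ℝ⁴} e^{−2t|ξ|²}/|1 − re^{iθ}e^{−t|ξ|²}|² dξ satisfies M(re^{iθ})² ≤ C·log(1/(1 − r·cos θ)) + C. -/

import Mathlib

open MeasureTheory Real Complex

private lemma gauss_val {b : ℝ} (hb : 0 < b) :
    ∫ ξ : EuclideanSpace ℝ (Fin 4), rexp (-b * ‖ξ‖ ^ 2) = (π / b) ^ 2 := by
  rw [GaussianFourier.integral_rexp_neg_mul_sq_norm hb, finrank_euclideanSpace_fin]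
  rw [show (((4 : ℕ) : ℝ) / 2 : ℝ) = ((2 : ℕ) : ℝ) by norm_num]
  exact Real.rpow_natCast _ 2

private lemma gauss_int {b : ℝ} (hb : 0 < b) :
    Integrable (fun ξ : EuclideanSpace ℝ (Fin 4) => rexp (-b * ‖ξ‖ ^ 2)) := by
  have h := GaussianFourier.integrable_cexp_neg_mul_sq_norm_add (V := EuclideanSpace ℝ (Fin 4))
    (b := (b : ℂ)) (by simpa using hb) 0 0
  refine h.norm.congr (Filter.Eventually.of_forall fun ξ => ?_)
  simp only [zero_mul, add_zero]
  rw [show -(b : ℂ) * (‖ξ‖ : ℂ) ^ 2 = ((-b * ‖ξ‖ ^ 2 : ℝ) : ℂ) by push_cast; ring]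
  rw [Complex.norm_exp, Complex.ofReal_re]

private lemma hasSum_succ_mul_geom {x : ℝ} (h0 : 0 ≤ x) (h1 : x < 1) :
    HasSum (fun n : ℕ => ((n : ℝ) + 1) * x ^ n) (1 / (1 - x) ^ 2) := by
  have hx : ‖x‖ < 1 := by rwa [Real.norm_eq_abs, _root_.abs_of_nonneg h0]
  have h := (hasSum_coe_mul_geometric_of_norm_lt_one hx).add
    (hasSum_geometric_of_lt_one h0 h1)
  have hne : (1 : ℝ) - x ≠ 0 := by linarith
  have h2 : (fun n : ℕ => ((n : ℝ) + 1) * x ^ n)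
      = fun n : ℕ => (n : ℝ) * x ^ n + x ^ n := by funext n; ring
  rw [h2, show (1 : ℝ) / (1 - x) ^ 2 = x / (1 - x) ^ 2 + (1 - x)⁻¹ by field_simp; ring]
  exact h

private lemma key_bound {t : ℝ} (ht : 0 < t) {ρ : ℝ} (h0 : 0 < ρ) (h1 : ρ < 1) :
    ∫ ξ : EuclideanSpace ℝ (Fin 4),
        rexp (-2 * t * ‖ξ‖ ^ 2) / (1 - ρ * rexp (-t * ‖ξ‖ ^ 2)) ^ 2
      ≤ π ^ 2 / t ^ 2 * (1 + Real.log (1 / (1 - ρ))) := by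
  have hρ1 : (0 : ℝ) < 1 - ρ := by linarith
  set F : ℕ → EuclideanSpace ℝ (Fin 4) → ℝ :=
    fun n ξ => ((n : ℝ) + 1) * ρ ^ n * rexp (-(((n : ℝ) + 2) * t) * ‖ξ‖ ^ 2) with hF
  have hptsum : ∀ ξ : EuclideanSpace ℝ (Fin 4),
      HasSum (fun n => F n ξ)
        (rexp (-2 * t * ‖ξ‖ ^ 2) / (1 - ρ * rexp (-t * ‖ξ‖ ^ 2)) ^ 2) := by
    intro ξ
    set w := rexp (-t * ‖ξ‖ ^ 2) with hw
    have hw0 : 0 < w := Real.exp_pos _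
    have hw1 : w ≤ 1 := by
      rw [hw, Real.exp_le_one_iff]
      have : 0 ≤ t * ‖ξ‖ ^ 2 := by positivity
      linarith
    have hx0 : 0 ≤ ρ * w := by positivity
    have hx1 : ρ * w < 1 := by nlinarith
    have h := (hasSum_succ_mul_geom hx0 hx1).mul_right (w ^ 2)
    have hterm : (fun n : ℕ => ((n : ℝ) + 1) * (ρ * w) ^ n * w ^ 2)
        = fun n => F n ξ := by
      funext n
      have hwpow : w ^ (n + 2) = rexp (-(((n : ℝ) + 2) * t) * ‖ξ‖ ^ 2) := by
        rw [hw, ← Real.exp_nat_mul]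
        congr 1; push_cast; ring
      calc ((n : ℝ) + 1) * (ρ * w) ^ n * w ^ 2
          = ((n : ℝ) + 1) * ρ ^ n * w ^ (n + 2) := by rw [mul_pow, pow_add]; ring
        _ = F n ξ := by rw [hwpow]
    have hval : rexp (-2 * t * ‖ξ‖ ^ 2) / (1 - ρ * w) ^ 2
        = 1 / (1 - ρ * w) ^ 2 * w ^ 2 := by
      have : rexp (-2 * t * ‖ξ‖ ^ 2) = w ^ 2 := by
        rw [hw, ← Real.exp_nat_mul]; congr 1; push_cast; ring
      rw [this]; ring
    rw [hval, ← hterm]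
    exact h
  have hFnonneg : ∀ n ξ, 0 ≤ F n ξ := fun n ξ => by positivity
  have hFint : ∀ n, Integrable (F n) volume := by
    intro n
    have hb : 0 < ((n : ℝ) + 2) * t := by positivity
    exact (gauss_int hb).const_mul _
  have hFval : ∀ n, (∫ ξ : EuclideanSpace ℝ (Fin 4), F n ξ)
      = ((n : ℝ) + 1) * ρ ^ n * (π / (((n : ℝ) + 2) * t)) ^ 2 := by
    intro n
    have hb : 0 < ((n : ℝ) + 2) * t := by positivity
    rw [hF]
    rw [integral_const_mul, gauss_val hb]
  have hFbound : ∀ n, (∫ ξ : EuclideanSpace ℝ (Fin 4), F n ξ)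
      ≤ π ^ 2 / t ^ 2 * (ρ ^ n / ((n : ℝ) + 1)) := by
    intro n
    rw [hFval n]
    have e1 : (π / (((n : ℝ) + 2) * t)) ^ 2 = π ^ 2 / (((n : ℝ) + 2) ^ 2 * t ^ 2) := by
      rw [div_pow, mul_pow]
    have hfrac : ((n : ℝ) + 1) / ((n : ℝ) + 2) ^ 2 ≤ 1 / ((n : ℝ) + 1) := by
      rw [div_le_div_iff₀ (by positivity) (by positivity)]
      nlinarith [Nat.cast_nonneg (α := ℝ) n]
    calc ((n : ℝ) + 1) * ρ ^ n * (π / (((n : ℝ) + 2) * t)) ^ 2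
        = (((n : ℝ) + 1) / ((n : ℝ) + 2) ^ 2) * ρ ^ n * (π ^ 2 / t ^ 2) := by
          have ht' : t ≠ 0 := ht.ne'
          have hn2 : ((n : ℝ) + 2) ≠ 0 := by positivity
          field_simp
      _ ≤ (1 / ((n : ℝ) + 1)) * ρ ^ n * (π ^ 2 / t ^ 2) := by
          apply mul_le_mul_of_nonneg_right
            (mul_le_mul_of_nonneg_right hfrac (by positivity)) (by positivity)
      _ = π ^ 2 / t ^ 2 * (ρ ^ n / ((n : ℝ) + 1)) := by ring
  have hmeas : ∀ n, AEStronglyMeasurable (F n) volume := fun n => by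
    apply Continuous.aestronglyMeasurable
    fun_prop
  have hlint : ∀ n, (∫⁻ ξ, ‖F n ξ‖₊ ∂volume) = ENNReal.ofReal (∫ ξ, F n ξ) := by
    intro n
    rw [ofReal_integral_eq_lintegral_ofReal (hFint n)
      (Filter.Eventually.of_forall (hFnonneg n))]
    exact lintegral_congr fun ξ => (Real.enorm_eq_ofReal (hFnonneg n ξ)).symm ▸ rfl
  have hsummgeo : Summable (fun n : ℕ => π ^ 2 / t ^ 2 * ρ ^ n) :=
    (summable_geometric_of_lt_one h0.le h1).mul_left _
  have hne : (∑' n, ∫⁻ ξ, ‖F n ξ‖₊ ∂volume) ≠ ⊤ := by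
    have hle : (∑' n, ∫⁻ ξ, ‖F n ξ‖₊ ∂volume)
        ≤ ∑' n : ℕ, ENNReal.ofReal (π ^ 2 / t ^ 2 * ρ ^ n) := by
      apply ENNReal.tsum_le_tsum
      intro n
      rw [hlint n]
      apply ENNReal.ofReal_le_ofReal
      refine le_trans (hFbound n) ?_
      have h1n : (1 : ℝ) ≤ (n : ℝ) + 1 := by
        have := Nat.cast_nonneg (α := ℝ) n; linarith
      have : ρ ^ n / ((n : ℝ) + 1) ≤ ρ ^ n := div_le_self (by positivity) h1n
      apply mul_le_mul_of_nonneg_left this (by positivity)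
    rw [← ENNReal.ofReal_tsum_of_nonneg (fun n => by positivity) hsummgeo] at hle
    exact (lt_of_le_of_lt hle ENNReal.ofReal_lt_top).ne
  have hint_eq : (∫ ξ : EuclideanSpace ℝ (Fin 4),
      rexp (-2 * t * ‖ξ‖ ^ 2) / (1 - ρ * rexp (-t * ‖ξ‖ ^ 2)) ^ 2)
      = ∑' n, ∫ ξ : EuclideanSpace ℝ (Fin 4), F n ξ := by
    rw [← integral_tsum hmeas hne]
    exact integral_congr_ae (Filter.Eventually.of_forall fun ξ => ((hptsum ξ).tsum_eq).symm)
  have hsum_int : Summable (fun n => ∫ ξ : EuclideanSpace ℝ (Fin 4), F n ξ) := by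
    apply Summable.of_nonneg_of_le (fun n => integral_nonneg (hFnonneg n)) _ hsummgeo
    intro n
    refine le_trans (hFbound n) ?_
    have h1n : (1 : ℝ) ≤ (n : ℝ) + 1 := by
      have := Nat.cast_nonneg (α := ℝ) n; linarith
    exact mul_le_mul_of_nonneg_left (div_le_self (by positivity) h1n) (by positivity)
  have hlog : HasSum (fun n : ℕ => ρ ^ (n + 1) / ((n : ℝ) + 1)) (-Real.log (1 - ρ)) := by
    have h' := hasSum_pow_div_log_of_abs_lt_one (x := ρ)
      (by rw [_root_.abs_of_nonneg h0.le]; exact h1)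
    simpa using h'
  have hgeo : HasSum (fun n : ℕ => (1 - ρ) * ρ ^ n) 1 := by
    have h' := (hasSum_geometric_of_lt_one h0.le h1).mul_left (1 - ρ)
    rwa [mul_inv_cancel₀ hρ1.ne'] at h'
  have hBnd : HasSum (fun n : ℕ => π ^ 2 / t ^ 2 * ((1 - ρ) * ρ ^ n + ρ ^ (n + 1) / ((n : ℝ) + 1)))
      (π ^ 2 / t ^ 2 * (1 + -Real.log (1 - ρ))) := (hgeo.add hlog).mul_left _
  have hcomp : ∀ n, (∫ ξ : EuclideanSpace ℝ (Fin 4), F n ξ)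
      ≤ π ^ 2 / t ^ 2 * ((1 - ρ) * ρ ^ n + ρ ^ (n + 1) / ((n : ℝ) + 1)) := by
    intro n
    refine le_trans (hFbound n) ?_
    have h1n : (1 : ℝ) ≤ (n : ℝ) + 1 := by
      have := Nat.cast_nonneg (α := ℝ) n; linarith
    have e : ρ ^ n / ((n : ℝ) + 1) - ρ ^ (n + 1) / ((n : ℝ) + 1)
        = ρ ^ n * (1 - ρ) / ((n : ℝ) + 1) := by rw [pow_succ]; ring
    have hle : ρ ^ n * (1 - ρ) / ((n : ℝ) + 1) ≤ ρ ^ n * (1 - ρ) :=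
      div_le_self (by positivity) h1n
    have : ρ ^ n / ((n : ℝ) + 1) ≤ (1 - ρ) * ρ ^ n + ρ ^ (n + 1) / ((n : ℝ) + 1) := by
      nlinarith [e, hle]
    exact mul_le_mul_of_nonneg_left this (by positivity)
  calc (∫ ξ : EuclideanSpace ℝ (Fin 4),
        rexp (-2 * t * ‖ξ‖ ^ 2) / (1 - ρ * rexp (-t * ‖ξ‖ ^ 2)) ^ 2)
      = ∑' n, ∫ ξ : EuclideanSpace ℝ (Fin 4), F n ξ := hint_eq
    _ ≤ π ^ 2 / t ^ 2 * (1 + -Real.log (1 - ρ)) :=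
        le_trans (Summable.tsum_le_tsum hcomp hsum_int hBnd.summable) (le_of_eq hBnd.tsum_eq)
    _ = π ^ 2 / t ^ 2 * (1 + Real.log (1 / (1 - ρ))) := by rw [one_div, Real.log_inv]

set_option maxHeartbeats 1000000 in
theorem stmt6 (t : ℝ) (ht : 0 < t) :
    ∃ C : ℝ, 0 < C ∧ ∀ r ∈ Set.Ico (0 : ℝ) 1, ∀ θ ∈ Set.Icc (0 : ℝ) (2 * π),
      r ^ 2 *
        (∫ ξ : EuclideanSpace ℝ (Fin 4),
          Real.exp (-2 * t * ‖ξ‖ ^ 2) /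
            (‖(1 - (r : ℂ) * Complex.exp (θ * Complex.I) *
              (Real.exp (-t * ‖ξ‖ ^ 2) : ℂ))‖) ^ 2)
      ≤ C * Real.log (1 / (1 - r * Real.cos θ)) + C := by
  have hC0 : (0 : ℝ) < 1 - Real.log 2 := by
    have := Real.log_two_lt_d9; linarith
  refine ⟨π ^ 2 / t ^ 2 / (1 - Real.log 2), div_pos (by positivity) hC0, ?_⟩
  intro r hr θ hθ
  obtain ⟨hr0, hr1⟩ := hr
  set C := π ^ 2 / t ^ 2 / (1 - Real.log 2) with hCdef
  set ρ := r * Real.cos θ with hρ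
  have hCpos : 0 < C := div_pos (by positivity) hC0
  have hρabs : |ρ| ≤ r := by
    rw [hρ, abs_mul, _root_.abs_of_nonneg hr0]
    exact mul_le_of_le_one_right hr0 (Real.abs_cos_le_one θ)
  have hρlt : ρ < 1 := lt_of_le_of_lt (le_trans (le_abs_self ρ) hρabs) hr1
  have hρgt : -1 < ρ := by
    have h1 := neg_abs_le ρ
    linarith
  have hρpos : 0 < 1 - ρ := by linarith
  have hρ2 : 1 - ρ ≤ 2 := by linarith
  have hL : -Real.log 2 ≤ Real.log (1 / (1 - ρ)) := by
    rw [one_div, Real.log_inv, neg_le_neg_iff]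
    exact Real.log_le_log hρpos hρ2
  -- pointwise bound
  have hpt : ∀ ξ : EuclideanSpace ℝ (Fin 4),
      rexp (-2 * t * ‖ξ‖ ^ 2) /
          (‖(1 - (r : ℂ) * Complex.exp (θ * Complex.I) *
            (rexp (-t * ‖ξ‖ ^ 2) : ℂ))‖) ^ 2
        ≤ rexp (-2 * t * ‖ξ‖ ^ 2) / (1 - ρ * rexp (-t * ‖ξ‖ ^ 2)) ^ 2 := by
    intro ξ
    set w := rexp (-t * ‖ξ‖ ^ 2) with hw
    have hw0 : 0 < w := Real.exp_pos _
    have hw1 : w ≤ 1 := by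
      rw [hw, Real.exp_le_one_iff]
      have : 0 ≤ t * ‖ξ‖ ^ 2 := by positivity
      linarith
    have hρw : ρ * w < 1 := by
      calc ρ * w ≤ |ρ| * w := mul_le_mul_of_nonneg_right (le_abs_self ρ) hw0.le
        _ ≤ |ρ| := mul_le_of_le_one_right (abs_nonneg ρ) hw1
        _ ≤ r := hρabs
        _ < 1 := hr1
    have hden : 0 < 1 - ρ * w := by linarith
    have hre : (1 - (r : ℂ) * Complex.exp (θ * Complex.I) * (w : ℂ)).re
        = 1 - ρ * w := by
      simp only [Complex.sub_re, Complex.mul_re, Complex.exp_ofReal_mul_I_re,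
        Complex.exp_ofReal_mul_I_im, Complex.ofReal_re, Complex.ofReal_im, Complex.one_re, hρ]
      ring
    have habs : (1 - ρ * w) ^ 2
        ≤ (‖(1 - (r : ℂ) * Complex.exp (θ * Complex.I) * (w : ℂ))‖) ^ 2 := by
      rw [Complex.sq_norm, Complex.normSq_apply, ← hre]
      nlinarith [mul_self_nonneg
        (1 - (r : ℂ) * Complex.exp (θ * Complex.I) * (w : ℂ)).im]
    exact div_le_div_of_nonneg_left (by positivity) (by positivity) habs
  have hInonneg : 0 ≤ ∫ ξ : EuclideanSpace ℝ (Fin 4),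
      rexp (-2 * t * ‖ξ‖ ^ 2) /
        (‖(1 - (r : ℂ) * Complex.exp (θ * Complex.I) *
          (rexp (-t * ‖ξ‖ ^ 2) : ℂ))‖) ^ 2 :=
    integral_nonneg fun ξ => by positivity
  have hr2 : r ^ 2 ≤ 1 := by nlinarith
  have hfirst : r ^ 2 * (∫ ξ : EuclideanSpace ℝ (Fin 4),
      rexp (-2 * t * ‖ξ‖ ^ 2) /
        (‖(1 - (r : ℂ) * Complex.exp (θ * Complex.I) *
          (rexp (-t * ‖ξ‖ ^ 2) : ℂ))‖) ^ 2)
      ≤ ∫ ξ : EuclideanSpace ℝ (Fin 4),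
      rexp (-2 * t * ‖ξ‖ ^ 2) /
        (‖(1 - (r : ℂ) * Complex.exp (θ * Complex.I) *
          (rexp (-t * ‖ξ‖ ^ 2) : ℂ))‖) ^ 2 := by
    nlinarith
  have hg2t : Integrable (fun ξ : EuclideanSpace ℝ (Fin 4) => rexp (-2 * t * ‖ξ‖ ^ 2)) := by
    refine (gauss_int (show (0:ℝ) < 2 * t by linarith)).congr
      (Filter.Eventually.of_forall fun ξ => ?_)
    ring_nf
  have hg2tval : (∫ ξ : EuclideanSpace ℝ (Fin 4), rexp (-2 * t * ‖ξ‖ ^ 2)) = (π / (2 * t)) ^ 2 := by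
    rw [← gauss_val (show (0 : ℝ) < 2 * t by linarith)]
    exact integral_congr_ae (Filter.Eventually.of_forall fun ξ => by ring_nf)
  rcases le_or_gt ρ 0 with hneg | hpos
  · -- ρ ≤ 0 : integrand ≤ gaussian
    have hpt2 : ∀ ξ : EuclideanSpace ℝ (Fin 4),
        rexp (-2 * t * ‖ξ‖ ^ 2) /
            (‖(1 - (r : ℂ) * Complex.exp (θ * Complex.I) *
              (rexp (-t * ‖ξ‖ ^ 2) : ℂ))‖) ^ 2
          ≤ rexp (-2 * t * ‖ξ‖ ^ 2) := by
      intro ξ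
      refine le_trans (hpt ξ) ?_
      have hw0 : 0 < rexp (-t * ‖ξ‖ ^ 2) := Real.exp_pos _
      have h1d : (1 : ℝ) ≤ (1 - ρ * rexp (-t * ‖ξ‖ ^ 2)) ^ 2 := by
        have hx : 0 ≤ -ρ * rexp (-t * ‖ξ‖ ^ 2) :=
          mul_nonneg (neg_nonneg.mpr hneg) hw0.le
        nlinarith [sq_nonneg (ρ * rexp (-t * ‖ξ‖ ^ 2))]
      calc rexp (-2 * t * ‖ξ‖ ^ 2) / (1 - ρ * rexp (-t * ‖ξ‖ ^ 2)) ^ 2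
          ≤ rexp (-2 * t * ‖ξ‖ ^ 2) / 1 :=
            div_le_div_of_nonneg_left (by positivity) one_pos h1d
        _ = rexp (-2 * t * ‖ξ‖ ^ 2) := div_one _
    have hI : (∫ ξ : EuclideanSpace ℝ (Fin 4),
        rexp (-2 * t * ‖ξ‖ ^ 2) /
          (‖(1 - (r : ℂ) * Complex.exp (θ * Complex.I) *
            (rexp (-t * ‖ξ‖ ^ 2) : ℂ))‖) ^ 2) ≤ (π / (2 * t)) ^ 2 := by
      rw [← hg2tval]
      exact integral_mono_of_nonneg (Filter.Eventually.of_forall fun ξ => by positivity)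
        hg2t (Filter.Eventually.of_forall hpt2)
    have h1 : (π / (2 * t)) ^ 2 ≤ π ^ 2 / t ^ 2 := by
      rw [div_pow]
      apply div_le_div_of_nonneg_left (by positivity) (by positivity)
      nlinarith
    have h2 : π ^ 2 / t ^ 2 = C * (1 - Real.log 2) := by
      rw [hCdef]; field_simp
    have h3 : C * (1 - Real.log 2) ≤ C * (Real.log (1 / (1 - ρ)) + 1) := by
      apply mul_le_mul_of_nonneg_left _ hCpos.le
      linarith
    calc r ^ 2 * _ ≤ _ := hfirst
      _ ≤ (π / (2 * t)) ^ 2 := hI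
      _ ≤ π ^ 2 / t ^ 2 := h1
      _ = C * (1 - Real.log 2) := h2
      _ ≤ C * (Real.log (1 / (1 - ρ)) + 1) := h3
      _ = C * Real.log (1 / (1 - ρ)) + C := by ring
  · -- 0 < ρ
    have hgint : Integrable (fun ξ : EuclideanSpace ℝ (Fin 4) =>
        rexp (-2 * t * ‖ξ‖ ^ 2) / (1 - ρ * rexp (-t * ‖ξ‖ ^ 2)) ^ 2) := by
      have hden : ∀ ξ : EuclideanSpace ℝ (Fin 4), 0 < 1 - ρ * rexp (-t * ‖ξ‖ ^ 2) := by
        intro ξ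
        have hw0 : 0 < rexp (-t * ‖ξ‖ ^ 2) := Real.exp_pos _
        have hw1 : rexp (-t * ‖ξ‖ ^ 2) ≤ 1 := by
          rw [Real.exp_le_one_iff]
          have : 0 ≤ t * ‖ξ‖ ^ 2 := by positivity
          linarith
        nlinarith
      refine Integrable.mono' (hg2t.const_mul ((1 - ρ)⁻¹ ^ 2)) ?_
        (Filter.Eventually.of_forall fun ξ => ?_)
      · apply Continuous.aestronglyMeasurable
        apply Continuous.div (by fun_prop) (by fun_prop)
        intro ξ
        exact pow_ne_zero 2 (hden ξ).ne'
      · have hw0 : 0 < rexp (-t * ‖ξ‖ ^ 2) := Real.exp_pos _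
        have hw1 : rexp (-t * ‖ξ‖ ^ 2) ≤ 1 := by
          rw [Real.exp_le_one_iff]
          have : 0 ≤ t * ‖ξ‖ ^ 2 := by positivity
          linarith
        have hd1 : 1 - ρ ≤ 1 - ρ * rexp (-t * ‖ξ‖ ^ 2) := by nlinarith
        rw [Real.norm_of_nonneg (by positivity)]
        calc rexp (-2 * t * ‖ξ‖ ^ 2) / (1 - ρ * rexp (-t * ‖ξ‖ ^ 2)) ^ 2
            ≤ rexp (-2 * t * ‖ξ‖ ^ 2) / (1 - ρ) ^ 2 := by
              apply div_le_div_of_nonneg_left (by positivity) (pow_pos hρpos 2)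
              nlinarith
          _ = (1 - ρ)⁻¹ ^ 2 * rexp (-2 * t * ‖ξ‖ ^ 2) := by
              rw [div_eq_mul_inv, inv_pow]; ring
    have hI : (∫ ξ : EuclideanSpace ℝ (Fin 4),
        rexp (-2 * t * ‖ξ‖ ^ 2) /
          (‖(1 - (r : ℂ) * Complex.exp (θ * Complex.I) *
            (rexp (-t * ‖ξ‖ ^ 2) : ℂ))‖) ^ 2)
        ≤ ∫ ξ : EuclideanSpace ℝ (Fin 4),
          rexp (-2 * t * ‖ξ‖ ^ 2) / (1 - ρ * rexp (-t * ‖ξ‖ ^ 2)) ^ 2 :=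
      integral_mono_of_nonneg (Filter.Eventually.of_forall fun ξ => by positivity)
        hgint (Filter.Eventually.of_forall hpt)
    have hkey := key_bound ht hpos hρlt
    have hL0 : 0 ≤ Real.log (1 / (1 - ρ)) := by
      apply Real.log_nonneg
      rw [le_div_iff₀ hρpos]
      linarith
    have hCge : π ^ 2 / t ^ 2 ≤ C := by
      rw [hCdef, le_div_iff₀ hC0]
      have hlog2 : 0 ≤ Real.log 2 := Real.log_nonneg (by norm_num)
      nlinarith [sq_nonneg π, sq_nonneg t, div_pos (show (0:ℝ) < π ^ 2 by positivity)
        (show (0:ℝ) < t ^ 2 by positivity)]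
    have hfin : π ^ 2 / t ^ 2 * (1 + Real.log (1 / (1 - ρ)))
        ≤ C * (1 + Real.log (1 / (1 - ρ))) :=
      mul_le_mul_of_nonneg_right hCge (by linarith)
    calc r ^ 2 * _ ≤ _ := hfirst
      _ ≤ _ := hI
      _ ≤ π ^ 2 / t ^ 2 * (1 + Real.log (1 / (1 - ρ))) := hkey
      _ ≤ C * (1 + Real.log (1 / (1 - ρ))) := hfin
      _ = C * Real.log (1 / (1 - ρ)) + C := by ring
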